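/- arXiv:1205.4233 — 2 statements merged into one kernel-verified Lean document; each statement's English description precedes it below -/
import Mathlib

section
/- Let (p_j)_{j≥1} be a nonnegative summable sequence of reals with Σ_{j≥1} p_j = 1, and let d ≥ 1 be an integer. Define the truncated sequence (p̄_j)_{j≥1} by p̄_j = p_j for 1 ≤ j ≤ d−1, p̄_d = Σ_{j≥d} p_j, and p̄_j = 0 for j > d. Then for every real x with 0 ≤ x ≤ d/(d+1), the series Σ_{j≥1} j·p_j·x^{j−1} converges and Σ_{j=1}^{d} j·p̄_j·x^{j−1} ≥ Σ_{j≥1} j·p_j·x^{j−1}. -/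
lemma key_decr (d : ℕ) (hd : 1 ≤ d) (x : ℝ) (hx0 : 0 ≤ x)
    (hx1 : x ≤ (d : ℝ) / (d + 1)) :
    ∀ j, d ≤ j → (j : ℝ) * x ^ (j - 1) ≤ (d : ℝ) * x ^ (d - 1) := by
  intro j hj
  induction j, hj using Nat.le_induction with
  | base => exact le_refl _
  | succ j hj ih =>
    have hj1 : 1 ≤ j := le_trans hd hj
    have hxj : x ≤ (j : ℝ) / (j + 1) := by
      refine hx1.trans ?_
      rw [div_le_div_iff₀ (by positivity) (by positivity)]
      have : (d : ℝ) ≤ j := by exact_mod_cast hj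
      nlinarith
    have h1 : ((j : ℝ) + 1) * x ≤ (j : ℝ) := by
      nlinarith [(le_div_iff₀ (by positivity : (0:ℝ) < (j:ℝ)+1)).mp hxj]
    have hpow : x ^ (j + 1 - 1) = x * x ^ (j - 1) := by
      obtain ⟨k, rfl⟩ := Nat.exists_eq_add_of_le hj1
      rw [show 1 + k + 1 - 1 = (1 + k - 1) + 1 by omega, pow_succ, mul_comm]
    calc ((j + 1 : ℕ) : ℝ) * x ^ (j + 1 - 1) = ((j:ℝ)+1) * x * x ^ (j-1) := by
            rw [hpow]; push_cast; ring
      _ ≤ (j : ℝ) * x ^ (j - 1) :=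
            mul_le_mul_of_nonneg_right h1 (by positivity)
      _ ≤ _ := ih

/-- Truncating a degree distribution `(p_j)_{j ≥ 1}` at degree `d`
(keeping `p_j` for `j < d`, lumping all mass of degrees `≥ d` onto degree `d`)
does not decrease the derivative of the moment generating function on `[0, d/(d+1)]`. -/
theorem lt_truncation_derivative_ge
    (p : ℕ → ℝ) (hp0 : p 0 = 0) (hp : ∀ j, 0 ≤ p j) (hsum : Summable p)
    (htot : ∑' j, p j = 1) (d : ℕ) (hd : 1 ≤ d)
    (pbar : ℕ → ℝ)
    (hbar_lt : ∀ j, 1 ≤ j → j ≤ d - 1 → pbar j = p j)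
    (hbar_d : pbar d = ∑' j : ℕ, if d ≤ j then p j else 0)
    (hbar_gt : ∀ j, d < j → pbar j = 0)
    (x : ℝ) (hx0 : 0 ≤ x) (hx1 : x ≤ (d : ℝ) / (d + 1)) :
    Summable (fun j : ℕ => (j : ℝ) * p j * x ^ (j - 1)) ∧
      (∑' j : ℕ, (j : ℝ) * p j * x ^ (j - 1)) ≤
        ∑ j ∈ Finset.Icc 1 d, (j : ℝ) * pbar j * x ^ (j - 1) := by
  set f : ℕ → ℝ := fun j => (j : ℝ) * p j * x ^ (j - 1) with hf
  have hdpos : (0:ℝ) < d := by exact_mod_cast hd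
  have hx1' : x ≤ 1 := by
    refine hx1.trans ?_
    rw [div_le_one (by positivity)]; linarith
  have hbound : ∀ j : ℕ, (j : ℝ) * x ^ (j - 1) ≤ d := by
    intro j
    rcases le_or_gt j d with h | h
    · calc (j : ℝ) * x ^ (j - 1) ≤ (j : ℝ) * 1 :=
            mul_le_mul_of_nonneg_left (pow_le_one₀ hx0 hx1') (by positivity)
        _ ≤ d := by rw [mul_one]; exact_mod_cast h
    · calc (j : ℝ) * x ^ (j - 1) ≤ (d : ℝ) * x ^ (d - 1) :=
            key_decr d hd x hx0 hx1 j h.le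
        _ ≤ (d : ℝ) * 1 :=
            mul_le_mul_of_nonneg_left (pow_le_one₀ hx0 hx1') (by positivity)
        _ = d := mul_one _
  have hfle : ∀ j, f j ≤ (d : ℝ) * p j := by
    intro j
    calc f j = ((j : ℝ) * x ^ (j - 1)) * p j := by ring
      _ ≤ (d : ℝ) * p j := mul_le_mul_of_nonneg_right (hbound j) (hp j)
  have hfnn : ∀ j, 0 ≤ f j := fun j => by
    have := hp j; positivity
  have hsumf : Summable f :=
    Summable.of_nonneg_of_le hfnn hfle (hsum.mul_left _)
  refine ⟨hsumf, ?_⟩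
  -- split tsum
  have hsplit : ∑ i ∈ Finset.range d, f i + ∑' k, f (k + d) = ∑' j, f j :=
    Summable.sum_add_tsum_nat_add d hsumf
  -- tail of p
  have hptail : Summable (fun k => p (k + d)) := (summable_nat_add_iff d).mpr hsum
  have hftail : Summable (fun k => f (k + d)) := (summable_nat_add_iff d).mpr hsumf
  -- pbar d equals tail sum of p
  have hq : Summable (fun j : ℕ => if d ≤ j then p j else 0) := by
    refine Summable.of_nonneg_of_le (fun j => ?_) (fun j => ?_) hsum
    · split <;> simp [hp j]
    · split <;> simp [hp j]
  have hpbar_d : pbar d = ∑' k, p (k + d) := by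
    rw [hbar_d, ← Summable.sum_add_tsum_nat_add d hq]
    have h1 : ∑ i ∈ Finset.range d, (if d ≤ i then p i else 0) = 0 := by
      apply Finset.sum_eq_zero
      intro i hi
      rw [if_neg (by simpa using Finset.mem_range.mp hi |>.not_ge)]
    have h2 : (fun k : ℕ => if d ≤ k + d then p (k + d) else 0) = fun k => p (k + d) := by
      funext k; rw [if_pos (Nat.le_add_left d k)]
    simp only [h2, h1, zero_add]
  -- tail bound
  have htail_le : ∑' k, f (k + d) ≤ (d : ℝ) * pbar d * x ^ (d - 1) := by
    have step : ∀ k, f (k + d) ≤ ((d : ℝ) * x ^ (d - 1)) * p (k + d) := by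
      intro k
      calc f (k + d) = (((k + d : ℕ) : ℝ) * x ^ (k + d - 1)) * p (k + d) := by ring
        _ ≤ ((d : ℝ) * x ^ (d - 1)) * p (k + d) :=
            mul_le_mul_of_nonneg_right
              (key_decr d hd x hx0 hx1 (k + d) (Nat.le_add_left d k)) (hp _)
    calc ∑' k, f (k + d) ≤ ∑' k, ((d : ℝ) * x ^ (d - 1)) * p (k + d) :=
          Summable.tsum_le_tsum step hftail (hptail.mul_left _)
      _ = ((d : ℝ) * x ^ (d - 1)) * ∑' k, p (k + d) := tsum_mul_left
      _ = (d : ℝ) * pbar d * x ^ (d - 1) := by rw [← hpbar_d]; ring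
  -- head equals sum over Icc 1 (d-1) of pbar terms
  have hhead : ∑ i ∈ Finset.range d, f i =
      ∑ j ∈ Finset.Icc 1 (d - 1), (j : ℝ) * pbar j * x ^ (j - 1) := by
    rw [← Finset.sum_subset (s₁ := Finset.Icc 1 (d-1)) (s₂ := Finset.range d)
      (fun j hj => by simp only [Finset.mem_Icc] at hj; exact Finset.mem_range.mpr (by omega))
      (fun j hj hj' => by
        simp only [Finset.mem_Icc, not_and_or, not_le] at hj'
        have : j = 0 := by
          rcases hj' with h | h
          · omega
          · exact absurd (Finset.mem_range.mp hj) (by omega)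
        simp [hf, this])]
    apply Finset.sum_congr rfl
    intro j hj
    simp only [Finset.mem_Icc] at hj
    rw [hf]; rw [hbar_lt j hj.1 hj.2]
  -- assemble RHS
  have hrhs : ∑ j ∈ Finset.Icc 1 d, (j : ℝ) * pbar j * x ^ (j - 1) =
      (∑ j ∈ Finset.Icc 1 (d - 1), (j : ℝ) * pbar j * x ^ (j - 1)) +
        (d : ℝ) * pbar d * x ^ (d - 1) := by
    rw [show d = (d - 1) + 1 by omega]
    rw [Finset.sum_Icc_succ_top (by omega)]
    congr 2 <;> rw [show d - 1 + 1 = d by omega]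
  rw [← hsplit, hrhs]
  exact add_le_add (le_of_eq hhead) htail_le
end

section
/- Let l ≥ 1 be an integer, and for i = 1,…,l let ε_i ∈ [0,1) and z_i ∈ (0,1). Set z* = max_{i} z_i and d_max = ⌈1/(1−z*)⌉ − 1. Suppose t > 0 and (p_j)_{j≥1} is a nonnegative summable sequence with Σ_{j≥1} p_j = 1 such that for every i and every x ∈ [0, z_i], t·(1−ε_i)·(Σ_{j≥1} j p_j x^{j−1}) + ln(1−x) > 0. Define (p̄_j)_{j≥1} by p̄_j = p_j for 1 ≤ j ≤ d_max−1, p̄_{d_max} = Σ_{j≥d_max} p_j, and p̄_j = 0 for j > d_max. Then (p̄_j) is nonnegative with Σ_{j≥1} p̄_j = 1, and for every i and every x ∈ [0, z_i], t·(1−ε_i)·(Σ_{j=1}^{d_max} j p̄_j x^{j−1}) + ln(1−x) > 0. -/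
/-- Any feasible LT degree distribution for the heterogeneous broadcast
optimization problem can be truncated at degree `d_max = ⌈1/(1 - max_i z_i)⌉ - 1`
while remaining a degree distribution and remaining feasible. -/
theorem lt_truncated_distribution_feasible
    (l : ℕ) (hl : 1 ≤ l) (ε z : Fin l → ℝ)
    (hε : ∀ i, ε i ∈ Set.Ico (0 : ℝ) 1) (hz : ∀ i, z i ∈ Set.Ioo (0 : ℝ) 1)
    (zstar : ℝ)
    (hzstar : zstar = Finset.univ.sup' (Finset.univ_nonempty_iff.mpr ⟨⟨0, hl⟩⟩) z)
    (dmax : ℕ) (hdmax : dmax = ⌈1 / (1 - zstar)⌉₊ - 1)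
    (t : ℝ) (ht : 0 < t)
    (p : ℕ → ℝ) (hp0 : p 0 = 0) (hp : ∀ j, 0 ≤ p j) (hsum : Summable p)
    (htot : ∑' j, p j = 1)
    (hfeas : ∀ i, ∀ x : ℝ, 0 ≤ x → x ≤ z i →
      0 < t * (1 - ε i) * (∑' j : ℕ, (j : ℝ) * p j * x ^ (j - 1)) + Real.log (1 - x))
    (pbar : ℕ → ℝ) (hbar0 : pbar 0 = 0)
    (hbar_lt : ∀ j, 1 ≤ j → j ≤ dmax - 1 → pbar j = p j)
    (hbar_d : pbar dmax = ∑' j : ℕ, if dmax ≤ j then p j else 0)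
    (hbar_gt : ∀ j, dmax < j → pbar j = 0) :
    (∀ j, 0 ≤ pbar j) ∧ (∑' j, pbar j = 1) ∧
      ∀ i, ∀ x : ℝ, 0 ≤ x → x ≤ z i →
        0 < t * (1 - ε i) * (∑ j ∈ Finset.Icc 1 dmax, (j : ℝ) * pbar j * x ^ (j - 1)) +
            Real.log (1 - x) := by
  have hne : (Finset.univ : Finset (Fin l)).Nonempty := Finset.univ_nonempty_iff.mpr ⟨⟨0, hl⟩⟩
  have hz_le : ∀ i, z i ≤ zstar := fun i => hzstar ▸ Finset.le_sup' z (Finset.mem_univ i)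
  have hzs0 : 0 < zstar := lt_of_lt_of_le (hz ⟨0, hl⟩).1 (hz_le ⟨0, hl⟩)
  have hzs1 : zstar < 1 := by
    rw [hzstar]; exact (Finset.sup'_lt_iff hne).mpr fun i _ => (hz i).2
  have h1z : (0:ℝ) < 1 - zstar := by linarith
  have hceil : (2 : ℕ) ≤ ⌈1 / (1 - zstar)⌉₊ := by
    have h1 : (1:ℝ) < 1/(1-zstar) := by rw [lt_div_iff₀ h1z]; nlinarith
    have := Nat.lt_ceil.mpr (show ((1:ℕ):ℝ) < 1/(1-zstar) by exact_mod_cast h1)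
    omega
  have hd1 : 1 ≤ dmax := by omega
  have hdle : 1 / (1 - zstar) ≤ ((dmax:ℝ) + 1) := by
    have h := Nat.le_ceil (1/(1-zstar))
    have h2 : (⌈1 / (1 - zstar)⌉₊ : ℝ) = (dmax:ℝ) + 1 := by
      have : dmax + 1 = ⌈1 / (1 - zstar)⌉₊ := by omega
      rw [← this]; push_cast; ring
    linarith [h2 ▸ h]
  have hkey0 : zstar * ((dmax:ℝ) + 1) ≤ (dmax:ℝ) := by
    have h := (div_le_iff₀ h1z).mp hdle
    nlinarith
  -- key pow inequality
  have key : ∀ (x:ℝ), 0 ≤ x → x ≤ zstar → ∀ j, dmax ≤ j →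
      (j:ℝ) * x ^ (j-1) ≤ (dmax:ℝ) * x ^ (dmax - 1) := by
    intro x hx0 hx1 j hj
    obtain ⟨k, rfl⟩ := Nat.exists_eq_add_of_le hj
    induction k with
    | zero => simp
    | succ k ih =>
      have hpow : x ^ (dmax + (k+1) - 1) = x * x ^ (dmax + k - 1) := by
        have he : dmax + (k+1) - 1 = (dmax + k - 1) + 1 := by omega
        rw [he, pow_succ]; ring
      have hx2 : x * ((dmax:ℝ) + k + 1) ≤ ((dmax:ℝ) + k) := by
        nlinarith [mul_le_mul_of_nonneg_right hx1 (show (0:ℝ) ≤ (dmax:ℝ)+k+1 by positivity)]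
      have hxp : (0:ℝ) ≤ x ^ (dmax + k - 1) := by positivity
      calc ((dmax + (k+1) : ℕ):ℝ) * x ^ (dmax + (k+1) - 1)
          = (x * ((dmax:ℝ) + k + 1)) * x ^ (dmax + k - 1) := by
            rw [hpow]; push_cast; ring
        _ ≤ ((dmax:ℝ) + k) * x ^ (dmax + k - 1) := by
            exact mul_le_mul_of_nonneg_right hx2 hxp
        _ = ((dmax + k : ℕ):ℝ) * x ^ (dmax + k - 1) := by push_cast; ring
        _ ≤ (dmax:ℝ) * x ^ (dmax - 1) := ih (by omega)
  -- tail
  have hq : Summable (fun j => if dmax ≤ j then p j else 0) := by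
    apply Summable.of_nonneg_of_le (fun j => ?_) (fun j => ?_) hsum
    · split_ifs; exacts [hp j, le_rfl]
    · split_ifs; exacts [le_rfl, hp j]
  have htail_sum : Summable (fun k => p (k + dmax)) := (summable_nat_add_iff dmax).mpr hsum
  have htail_eq : pbar dmax = ∑' k, p (k + dmax) := by
    rw [hbar_d]
    have h := Summable.sum_add_tsum_nat_add dmax hq
    have h0 : ∑ i ∈ Finset.range dmax, (if dmax ≤ i then p i else 0) = 0 := by
      apply Finset.sum_eq_zero; intro i hi
      rw [if_neg (by simp at hi; omega)]
    rw [← h, h0, zero_add]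
    apply tsum_congr; intro k; rw [if_pos (by omega)]
  have htail_nonneg : 0 ≤ pbar dmax := by
    rw [htail_eq]; exact tsum_nonneg fun k => hp _
  -- part 1
  have hnonneg : ∀ j, 0 ≤ pbar j := by
    intro j
    rcases lt_trichotomy j dmax with h|h|h
    · rcases Nat.eq_zero_or_pos j with rfl|hj
      · rw [hbar0]
      · rw [hbar_lt j hj (by omega)]; exact hp j
    · rw [h]; exact htail_nonneg
    · rw [hbar_gt j h]
  refine ⟨hnonneg, ?_, ?_⟩
  -- part 2
  · have ht1 : ∑' j, pbar j = ∑ j ∈ Finset.range (dmax+1), pbar j := by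
      apply tsum_eq_sum
      intro j hj
      exact hbar_gt j (by simp at hj; omega)
    rw [ht1, Finset.sum_range_succ]
    have h2 : ∑ j ∈ Finset.range dmax, pbar j = ∑ j ∈ Finset.range dmax, p j := by
      apply Finset.sum_congr rfl
      intro j hj
      simp only [Finset.mem_range] at hj
      rcases Nat.eq_zero_or_pos j with rfl|hj1
      · rw [hbar0, hp0]
      · exact hbar_lt j hj1 (by omega)
    rw [h2, htail_eq, Summable.sum_add_tsum_nat_add dmax hsum]
    exact htot
  -- part 3
  · intro i x hx0 hx1
    have hxz : x ≤ zstar := le_trans hx1 (hz_le i)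
    set f : ℕ → ℝ := fun j => (j:ℝ) * p j * x ^ (j-1) with hf_def
    set g : ℕ → ℝ := fun j => if j < dmax then f j else (dmax:ℝ) * x^(dmax-1) * p j with hg_def
    have hf0 : ∀ j, 0 ≤ f j := fun j => by
      have : (0:ℝ) ≤ x ^ (j-1) := by positivity
      have := hp j
      positivity
    have hfle : ∀ j, f j ≤ g j := by
      intro j
      simp only [hg_def]
      split_ifs with h
      · exact le_rfl
      · have hk := key x hx0 hxz j (by omega)
        calc f j = ((j:ℝ) * x^(j-1)) * p j := by simp [hf_def]; ring
          _ ≤ ((dmax:ℝ) * x^(dmax-1)) * p j :=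
            mul_le_mul_of_nonneg_right hk (hp j)
          _ = (dmax:ℝ) * x^(dmax-1) * p j := by ring
    have hg : Summable g := by
      rw [← summable_nat_add_iff dmax]
      have : (fun n => g (n + dmax)) = fun n => (dmax:ℝ) * x^(dmax-1) * p (n + dmax) := by
        funext n; simp only [hg_def]; rw [if_neg (by omega)]
      rw [this]
      exact htail_sum.mul_left _
    have hf : Summable f := Summable.of_nonneg_of_le hf0 hfle hg
    have hTle : (∑' j, f j) ≤ ∑' j, g j := Summable.tsum_le_tsum hfle hf hg
    -- compute tsum g
    have hgval : ∑' j, g j = (∑ j ∈ Finset.range dmax, f j) + (dmax:ℝ) * x^(dmax-1) * pbar dmax := by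
      rw [← Summable.sum_add_tsum_nat_add dmax hg]
      congr 1
      · apply Finset.sum_congr rfl
        intro j hj
        simp only [Finset.mem_range] at hj
        simp only [hg_def]; rw [if_pos hj]
      · rw [htail_eq]
        rw [← tsum_mul_left]
        apply tsum_congr; intro k
        simp only [hg_def]; rw [if_neg (by omega)]
    -- compute the goal finite sum
    have hS : ∑ j ∈ Finset.Icc 1 dmax, (j:ℝ) * pbar j * x ^ (j-1)
        = (∑ j ∈ Finset.range dmax, f j) + (dmax:ℝ) * x^(dmax-1) * pbar dmax := by
      have hins : Finset.range (dmax+1) = insert 0 (Finset.Icc 1 dmax) := by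
        ext j; simp; omega
      have h0 : ∑ j ∈ Finset.range (dmax+1), (j:ℝ) * pbar j * x ^ (j-1)
          = ∑ j ∈ Finset.Icc 1 dmax, (j:ℝ) * pbar j * x ^ (j-1) := by
        rw [hins, Finset.sum_insert (by simp)]
        simp
      rw [← h0, Finset.sum_range_succ]
      congr 1
      · apply Finset.sum_congr rfl
        intro j hj
        simp only [Finset.mem_range] at hj
        rcases Nat.eq_zero_or_pos j with rfl|hj1
        · simp [hf_def]
        · rw [hbar_lt j hj1 (by omega)]
      · ring
    have hεi : 0 < 1 - ε i := by have := (hε i).2; linarith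
    have hc : 0 < t * (1 - ε i) := by positivity
    have hmain := hfeas i x hx0 hx1
    rw [hS]
    have : t * (1 - ε i) * (∑' j, f j) ≤
        t * (1 - ε i) * ((∑ j ∈ Finset.range dmax, f j) + (dmax:ℝ) * x^(dmax-1) * pbar dmax) := by
      apply mul_le_mul_of_nonneg_left _ hc.le
      rw [← hgval]; exact hTle
    simp only [hf_def] at this hmain
    linarith
end
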